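/- Let X ⊂ ℝ^d be compact and k a continuous (Mercer) kernel on X whose RKHS F is infinite-dimensional. Then there is no d > 0 such that for all f in the direction space F̃ of the affine hull of the marginal polytope, ⟨μ, f⟩ + d‖f‖ ≤ max_{x∈X} f(x). In other words, μ never lies in the relative interior of M with a ball of positive radius in infinite-dimensional Mercer kernel settings. -/

import Mathlib

open MeasureTheory
open scoped RealInnerProductSpace

open Metric
lemma exists_unit_orth {F : Type*} [NormedAddCommGroup F] [InnerProductSpace ℝ F]
    (D S : Submodule ℝ F) (hD : ¬ Module.Finite ℝ D) [FiniteDimensional ℝ S] :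
    ∃ f : F, f ∈ D ∧ ‖f‖ = 1 ∧ ∀ u ∈ S, ⟪u, f⟫ = 0 := by
  by_cases hmeet : ∃ g : F, g ∈ D ⊓ Sᗮ ∧ g ≠ 0
  · obtain ⟨g, ⟨hgD, hgS⟩, hg0⟩ := hmeet
    refine ⟨‖g‖⁻¹ • g, D.smul_mem _ hgD, ?_, fun u hu => ?_⟩
    · rw [norm_smul, norm_inv, norm_norm]
      exact inv_mul_cancel₀ (norm_ne_zero_iff.mpr hg0)
    · rw [inner_smul_right, (Submodule.mem_orthogonal S g).mp hgS u hu, mul_zero]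
  · exfalso
    push_neg at hmeet
    apply hD
    have : CompleteSpace S := FiniteDimensional.complete ℝ S
    refine Module.Finite.of_injective
      ((S.orthogonalProjectionOnto).toLinearMap.comp D.subtype) ?_
    intro a b hab
    have h : (S.orthogonalProjectionOnto) ((a : F) - b) = 0 := by
      rw [map_sub, sub_eq_zero]; exact hab
    have h2 : ((a : F) - b) ∈ Sᗮ := Submodule.orthogonalProjectionOnto_eq_zero_iff.mp h
    have := hmeet _ ⟨(D.sub_mem a.2 b.2), h2⟩
    exact Subtype.ext (sub_eq_zero.mp this)


/-- For a continuous (Mercer) kernel on a compact subset `X ⊆ ℝ^d` whose RKHS `F` is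
infinite-dimensional, there is no `d > 0` such that
`⟪μ, f⟫ + d‖f‖ ≤ max_{x∈X} f(x)` for all `f` in the direction space of the affine
hull of the marginal polytope: `μ` never lies in the relative interior of `M` with a
ball of positive radius. -/
theorem mean_not_in_relative_interior_infinite_dimensional
    {F : Type*} [NormedAddCommGroup F] [InnerProductSpace ℝ F] [CompleteSpace F]
    (hinf : ¬ FiniteDimensional ℝ F)
    (n : ℕ) (X : Set (EuclideanSpace ℝ (Fin n)))
    (hXcpt : IsCompact X) (hXne : X.Nonempty)
    (Φ : X → F) (hΦ : Continuous Φ)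
    (hspan : Dense (Submodule.span ℝ (Set.range Φ) : Set F))
    (R : ℝ) (hR : ∀ x, ‖Φ x‖ ≤ R)
    (hLip : ∀ f : F, ‖f‖ ≤ 1 → ∀ x y : X,
      |⟪f, Φ x⟫ - ⟪f, Φ y⟫| ≤ 2 * R * dist x y)
    (p : Measure X) [IsProbabilityMeasure p]
    (hint : Integrable Φ p)
    (μ : F) (hμ : μ = ∫ x, Φ x ∂p) :
    ¬ ∃ d > (0 : ℝ), ∀ f ∈ (affineSpan ℝ (Set.range Φ)).direction,
        ⟪μ, f⟫ + d * ‖f‖ ≤ ⨆ x : X, ⟪f, Φ x⟫ := by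
  rintro ⟨d, hd, h⟩
  have : CompactSpace ↥X := isCompact_iff_compactSpace.mp hXcpt
  haveI hne : Nonempty ↥X := hXne.to_subtype
  obtain ⟨x₀⟩ := id hne
  -- direction submodule
  set D : Submodule ℝ F := (affineSpan ℝ (Set.range Φ)).direction with hDdef
  -- D is infinite dimensional
  have hDinf : ¬ Module.Finite ℝ D := by
    intro hfin
    apply hinf
    set E : Submodule ℝ F := D ⊔ (Submodule.span ℝ {Φ x₀}) with hE
    have hEfin : FiniteDimensional ℝ E := by
      apply Submodule.finiteDimensional_sup
    have hle : Submodule.span ℝ (Set.range Φ) ≤ E := by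
      rw [Submodule.span_le]
      rintro _ ⟨x, rfl⟩
      have hmem : Φ x - Φ x₀ ∈ D := by
        apply AffineSubspace.vsub_mem_direction
        · exact subset_affineSpan ℝ _ ⟨x, rfl⟩
        · exact subset_affineSpan ℝ _ ⟨x₀, rfl⟩
      have : Φ x = (Φ x - Φ x₀) + Φ x₀ := by abel
      rw [this]
      exact E.add_mem (Submodule.mem_sup_left hmem)
        (Submodule.mem_sup_right (Submodule.mem_span_singleton_self _))
    have hEclosed : IsClosed (E : Set F) := Submodule.closed_of_finiteDimensional E
    have hEtop : E = ⊤ := by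
      rw [Submodule.eq_top_iff']
      intro v
      have := hspan.closure_eq ▸ (subset_closure : (Submodule.span ℝ (Set.range Φ) : Set F) ⊆ _)
      have h1 : closure (Submodule.span ℝ (Set.range Φ) : Set F) ⊆ (E : Set F) := by
        rw [← hEclosed.closure_eq]
        exact closure_mono hle
      have h2 : v ∈ closure (Submodule.span ℝ (Set.range Φ) : Set F) := by
        rw [hspan.closure_eq]; trivial
      exact h1 h2
    have : FiniteDimensional ℝ (⊤ : Submodule ℝ F) := hEtop ▸ hEfin
    exact (Submodule.topEquiv : (⊤ : Submodule ℝ F) ≃ₗ[ℝ] F).finiteDimensional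
  -- finite net
  have htb := (isCompact_range hΦ).totallyBounded
  obtain ⟨t, htfin, hcov⟩ := (totallyBounded_iff.mp htb) (d/4) (by linarith)
  -- unit orthogonal vector
  have hSfin : FiniteDimensional ℝ (Submodule.span ℝ (insert μ t)) :=
    FiniteDimensional.span_of_finite ℝ (htfin.insert μ)
  obtain ⟨f, hfD, hf1, hforth⟩ := exists_unit_orth D (Submodule.span ℝ (insert μ t)) hDinf
  have hμf : ⟪μ, f⟫ = 0 :=
    hforth μ (Submodule.subset_span (Set.mem_insert _ _))
  -- sup bound
  have hsup : (⨆ x : X, ⟪f, Φ x⟫) ≤ d/4 := by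
    apply ciSup_le
    intro x
    obtain ⟨y, hy, hxy⟩ := by
      have := hcov ⟨x, rfl⟩
      simpa using this
    have hfy : ⟪f, y⟫ = 0 := by
      rw [real_inner_comm]
      exact hforth y (Submodule.subset_span (Set.mem_insert_of_mem _ hy))
    calc ⟪f, Φ x⟫ = ⟪f, Φ x - y⟫ + ⟪f, y⟫ := by rw [inner_sub_right]; ring
    _ = ⟪f, Φ x - y⟫ := by rw [hfy, add_zero]
    _ ≤ ‖f‖ * ‖Φ x - y‖ := real_inner_le_norm _ _
    _ ≤ d/4 := by
        rw [hf1, one_mul]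
        have : dist (Φ x) y < d/4 := hxy
        rw [dist_eq_norm] at this
        linarith
  have := h f hfD
  rw [hμf, hf1, mul_one, zero_add] at this
  linarith [le_trans this hsup]
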